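/- arXiv:math/0609796 — 2 statements merged into one kernel-verified Lean document; each statement's English description precedes it below -/
import Mathlib

section
/- Define z(λ) = 2|λ|/n − (ℓ(λ) + [λ_1 = n]) for a strict partition λ contained in ρ_n, where [·] is 1 if the condition holds and 0 otherwise. With ι as in the orthogonal Grassmannian case (ι(λ)_i = n − λ_{2δ(λ)+1−i} after padding with a zero to length 2δ(λ)), one has z(ι(λ)) = −z(λ). -/
/-- The orthogonal Grassmannian involution on strict partitions `λ ⊆ ρ_n`,
identified with their sets of parts: pad `λ` with a zero part if its length is
odd (so it has `2δ(λ)` parts), replace each part `x` by `n - x`, and discard a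
resulting zero part (so `ι(λ)ᵢ = n - λ_{2δ(λ)+1-i}`). -/
def orthIota (n : ℕ) (S : Finset ℕ) : Finset ℕ :=
  ((if 2 ∣ S.card then S else insert 0 S).image fun x => n - x).erase 0

/-- with `z(λ) = 2|λ|/n - (ℓ(λ) + [λ₁ = n])`, where `[λ₁ = n]` is
`1` if the largest part of `λ` equals `n` and `0` otherwise, and `ι` the
orthogonal Grassmannian involution, one has `z(ι(λ)) = -z(λ)`. -/
theorem orth_z_neg (n : ℕ) (hn : 0 < n) (S : Finset ℕ) (hS : S ⊆ Finset.Icc 1 n) :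
    2 * (∑ i ∈ orthIota n S, (i : ℚ)) / n
        - (((orthIota n S).card : ℚ) + if n ∈ orthIota n S then 1 else 0)
      = -(2 * (∑ i ∈ S, (i : ℚ)) / n
        - ((S.card : ℚ) + if n ∈ S then 1 else 0)) := by
  classical
  set T : Finset ℕ := if 2 ∣ S.card then S else insert 0 S with hTdef
  have hι : orthIota n S = (T.image fun x => n - x).erase 0 := rfl
  have h0S : (0 : ℕ) ∉ S := fun h => by simpa using hS h
  have hTsub : ∀ x ∈ T, x ≤ n := by
    intro x hx
    rw [hTdef] at hx
    split_ifs at hx with h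
    · exact (Finset.mem_Icc.mp (hS hx)).2
    · rcases Finset.mem_insert.mp hx with rfl | hx
      · exact Nat.zero_le n
      · exact (Finset.mem_Icc.mp (hS hx)).2
  have hnT : n ∈ T ↔ n ∈ S := by
    rw [hTdef]; split_ifs with h
    · rfl
    · simp [Finset.mem_insert, hn.ne']
  have h0T : 0 ∈ T ↔ ¬ 2 ∣ S.card := by
    rw [hTdef]; split_ifs with h <;> simp [h, h0S]
  have hcardT : (T.card : ℚ) = if 2 ∣ S.card then (S.card : ℚ) else (S.card : ℚ) + 1 := by
    rw [hTdef]; split_ifs with h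
    · rfl
    · rw [Finset.card_insert_of_notMem h0S]; push_cast; ring
  have hsumT : ∑ i ∈ T, (i : ℚ) = ∑ i ∈ S, (i : ℚ) := by
    rw [hTdef]; split_ifs with h
    · rfl
    · rw [Finset.sum_insert h0S]; simp
  have hinj : ∀ x ∈ T, ∀ y ∈ T, n - x = n - y → x = y := by
    intro x hx y hy h
    have hx' := hTsub x hx; have hy' := hTsub y hy; omega
  have hmem0 : (0 ∈ T.image fun x => n - x) ↔ n ∈ S := by
    simp only [Finset.mem_image]
    constructor
    · rintro ⟨x, hx, hx0⟩
      have hx' := hTsub x hx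
      have : x = n := by omega
      subst this; exact hnT.mp hx
    · intro h; exact ⟨n, hnT.mpr h, by omega⟩
  have hmemn : n ∈ orthIota n S ↔ ¬ 2 ∣ S.card := by
    rw [hι, Finset.mem_erase]
    simp only [Finset.mem_image]
    constructor
    · rintro ⟨-, x, hx, hxn⟩
      have hx' := hTsub x hx
      have : x = 0 := by omega
      subst this; exact h0T.mp hx
    · intro h
      exact ⟨hn.ne', 0, h0T.mpr h, by omega⟩
  have hsumι : ∑ i ∈ orthIota n S, (i : ℚ)
      = (T.card : ℚ) * n - ∑ i ∈ S, (i : ℚ) := by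
    rw [hι, Finset.sum_erase _ (by norm_num), Finset.sum_image hinj]
    rw [Finset.sum_congr rfl fun x hx => (Nat.cast_sub (hTsub x hx) : ((n - x : ℕ) : ℚ) = n - x)]
    rw [Finset.sum_sub_distrib, Finset.sum_const, nsmul_eq_mul, hsumT]
  have hcardimg : (T.image fun x => n - x).card = T.card :=
    Finset.card_image_of_injOn fun x hx y hy h => hinj x hx y hy h
  have hcardι : ((orthIota n S).card : ℚ)
      = (T.card : ℚ) - if n ∈ S then 1 else 0 := by
    rw [hι]
    by_cases h : n ∈ S
    · rw [Finset.card_erase_of_mem (hmem0.mpr h), hcardimg, if_pos h]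
      have : 1 ≤ T.card := Finset.card_pos.mpr ⟨n, hnT.mpr h⟩
      push_cast [Nat.cast_sub this]; ring
    · rw [Finset.erase_eq_of_notMem (fun hc => h (hmem0.mp hc)), hcardimg, if_neg h]
      ring
  rw [hsumι, hcardι]
  rw [show (if n ∈ orthIota n S then (1:ℚ) else 0)
      = (if 2 ∣ S.card then (0:ℚ) else 1) by
    by_cases h : 2 ∣ S.card
    · rw [if_pos h, if_neg (fun hc => (hmemn.mp hc) h)]
    · rw [if_neg h, if_pos (hmemn.mpr h)]]
  have hn' : (n : ℚ) ≠ 0 := Nat.cast_ne_zero.mpr hn.ne'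
  rw [hcardT]
  by_cases h : 2 ∣ S.card <;> by_cases h2 : n ∈ S <;>
    simp only [if_pos, if_neg, h, h2, if_true, if_false] <;> field_simp <;> ring
end

section
/- Let G be the group of bijections of a set S generated by two involutions p and ι, and let η be the order of p∘ι. Let Γ be the subgroup of bijections of S×S×S generated by (p,p,ι), (p,ι,p), (ι,p,p) acting componentwise. Then the projection of Γ to the first factor surjects onto G, its kernel consists of the elements (1,(pι)^k,(ιp)^k) for k ∈ ℤ, and |Γ| = 2η² (assuming G has order 2η, i.e. p ≠ ι generate a dihedral group of order 2η). -/
/-- let `p, ι` be involutive bijections of a set `S`, let `η` be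
the order of `p∘ι`, and assume the group `G = ⟨p, ι⟩` has order `2η`. Let `Γ`
be the group of bijections of `S × S × S` generated by the componentwise maps
`(p,p,ι)`, `(p,ι,p)`, `(ι,p,p)` (a subgroup of `Perm S × Perm S × Perm S`
acting componentwise). Then the projection of `Γ` to the first factor surjects
onto `G`, its kernel consists exactly of the elements `(1, (pι)^k, (ιp)^k)`
for `k ∈ ℤ`, and `|Γ| = 2η²`. -/
theorem gamma_group (S : Type*) (p ι : Equiv.Perm S) (η : ℕ)
    (hp : p * p = 1) (hι : ι * ι = 1)
    (hη : orderOf (p * ι) = η)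
    (hG : Nat.card (Subgroup.closure ({p, ι} : Set (Equiv.Perm S))) = 2 * η) :
    (Subgroup.closure ({(p,p,ι), (p,ι,p), (ι,p,p)} :
          Set (Equiv.Perm S × Equiv.Perm S × Equiv.Perm S))).map
        (MonoidHom.fst (Equiv.Perm S) (Equiv.Perm S × Equiv.Perm S))
      = Subgroup.closure ({p, ι} : Set (Equiv.Perm S)) ∧
    (∀ x ∈ Subgroup.closure ({(p,p,ι), (p,ι,p), (ι,p,p)} :
          Set (Equiv.Perm S × Equiv.Perm S × Equiv.Perm S)),
        x.1 = 1 → ∃ k : ℤ, x = (1, (p*ι)^k, (ι*p)^k)) ∧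
    (∀ k : ℤ, ((1, (p*ι)^k, (ι*p)^k) : Equiv.Perm S × Equiv.Perm S × Equiv.Perm S)
        ∈ Subgroup.closure ({(p,p,ι), (p,ι,p), (ι,p,p)} :
            Set (Equiv.Perm S × Equiv.Perm S × Equiv.Perm S))) ∧
    Nat.card (Subgroup.closure ({(p,p,ι), (p,ι,p), (ι,p,p)} :
          Set (Equiv.Perm S × Equiv.Perm S × Equiv.Perm S))) = 2 * η ^ 2 := by
  have hpinv : p⁻¹ = p := inv_eq_of_mul_eq_one_right hp
  have hiinv : ι⁻¹ = ι := inv_eq_of_mul_eq_one_right hι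
  set r : Equiv.Perm S := p * ι with hrdef
  have hrinv : r⁻¹ = ι * p := by rw [hrdef, mul_inv_rev, hpinv, hiinv]
  set Γ := Subgroup.closure ({(p,p,ι), (p,ι,p), (ι,p,p)} :
      Set (Equiv.Perm S × Equiv.Perm S × Equiv.Perm S)) with hΓdef
  -- commutation lemmas
  have hscp : SemiconjBy p r r⁻¹ := by
    show p * r = r⁻¹ * p
    rw [hrinv, hrdef, ← mul_assoc, hp, one_mul, mul_assoc, hp, mul_one]
  have hsci : SemiconjBy ι r r⁻¹ := by
    show ι * r = r⁻¹ * ι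
    rw [hrinv, hrdef, mul_assoc]
  have hcp : ∀ a : ℤ, p * r ^ a = r ^ (-a) * p := by
    intro a
    have := hscp.zpow_right a
    rw [SemiconjBy, inv_zpow, ← zpow_neg] at this
    exact this
  have hci : ∀ a : ℤ, ι * r ^ a = r ^ (-a) * ι := by
    intro a
    have := hsci.zpow_right a
    rw [SemiconjBy, inv_zpow, ← zpow_neg] at this
    exact this
  have hcp' : ∀ a : ℤ, r ^ a * p = p * r ^ (-a) := by
    intro a; have := hcp (-a); rw [neg_neg] at this; exact this.symm
  have hci' : ∀ a : ℤ, r ^ a * ι = ι * r ^ (-a) := by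
    intro a; have := hci (-a); rw [neg_neg] at this; exact this.symm
  -- component multiplication lemmas
  have crr : ∀ a c : ℤ, r ^ a * r ^ c = r ^ (a + c) := fun a c => (zpow_add r a c).symm
  have cpp : ∀ a c : ℤ, r ^ a * (p * r ^ c) = p * r ^ (c - a) := by
    intro a c
    rw [← mul_assoc, hcp' a, mul_assoc, crr, show (-a + c : ℤ) = c - a by ring]
  have cpi : ∀ a c : ℤ, r ^ a * (ι * r ^ c) = ι * r ^ (c - a) := by
    intro a c
    rw [← mul_assoc, hci' a, mul_assoc, crr, show (-a + c : ℤ) = c - a by ring]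
  have cpr : ∀ a c : ℤ, (p * r ^ a) * r ^ c = p * r ^ (a + c) := by
    intro a c; rw [mul_assoc, crr]
  have cir : ∀ a c : ℤ, (ι * r ^ a) * r ^ c = ι * r ^ (a + c) := by
    intro a c; rw [mul_assoc, crr]
  have cpp2 : ∀ a c : ℤ, (p * r ^ a) * (p * r ^ c) = r ^ (c - a) := by
    intro a c; rw [mul_assoc, cpp, ← mul_assoc, hp, one_mul]
  have cii2 : ∀ a c : ℤ, (ι * r ^ a) * (ι * r ^ c) = r ^ (c - a) := by
    intro a c; rw [mul_assoc, cpi, ← mul_assoc, hι, one_mul]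
  -- generators
  have hg1 : ((p,p,ι) : Equiv.Perm S × Equiv.Perm S × Equiv.Perm S) ∈ Γ :=
    Subgroup.subset_closure (by simp)
  have hg2 : ((p,ι,p) : Equiv.Perm S × Equiv.Perm S × Equiv.Perm S) ∈ Γ :=
    Subgroup.subset_closure (by simp)
  have hg3 : ((ι,p,p) : Equiv.Perm S × Equiv.Perm S × Equiv.Perm S) ∈ Γ :=
    Subgroup.subset_closure (by simp)
  have hu : ((1, r, r⁻¹) : Equiv.Perm S × Equiv.Perm S × Equiv.Perm S) ∈ Γ := by
    have := mul_mem hg1 hg2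
    have he : ((p,p,ι) : Equiv.Perm S × Equiv.Perm S × Equiv.Perm S) * (p,ι,p)
        = (1, r, r⁻¹) := by
      rw [Prod.mk_mul_mk, Prod.mk_mul_mk, hp, hrinv]
    rwa [he] at this
  have hv : ((r, 1, r⁻¹) : Equiv.Perm S × Equiv.Perm S × Equiv.Perm S) ∈ Γ := by
    have := mul_mem hg1 hg3
    have he : ((p,p,ι) : Equiv.Perm S × Equiv.Perm S × Equiv.Perm S) * (ι,p,p)
        = (r, 1, r⁻¹) := by
      rw [Prod.mk_mul_mk, Prod.mk_mul_mk, hp, hrinv]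
    rwa [he] at this
  -- all normal-form elements are in Γ
  have hF : ∀ a b : ℤ, ((r ^ a, r ^ b, r ^ (-a - b)) :
      Equiv.Perm S × Equiv.Perm S × Equiv.Perm S) ∈ Γ := by
    intro a b
    have := mul_mem (zpow_mem hv a) (zpow_mem hu b)
    have he : ((r, 1, r⁻¹) : Equiv.Perm S × Equiv.Perm S × Equiv.Perm S) ^ a
        * (1, r, r⁻¹) ^ b = (r ^ a, r ^ b, r ^ (-a - b)) := by
      simp only [Prod.pow_def, Prod.mk_mul_mk, one_zpow, mul_one,
        one_mul, inv_zpow, ← zpow_neg, crr]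
      rw [show (-a + -b : ℤ) = -a - b by ring]
    rwa [he] at this
  have hFt : ∀ a b : ℤ, ((p * r ^ a, p * r ^ b, ι * r ^ (-a - b)) :
      Equiv.Perm S × Equiv.Perm S × Equiv.Perm S) ∈ Γ := by
    intro a b
    have := mul_mem hg1 (hF a b)
    rwa [show ((p,p,ι) : Equiv.Perm S × Equiv.Perm S × Equiv.Perm S)
      * (r ^ a, r ^ b, r ^ (-a - b)) = (p * r ^ a, p * r ^ b, ι * r ^ (-a - b)) from rfl]
      at this
  -- structure theorem for Γ
  have hstruct : ∀ x ∈ Γ, (∃ a b : ℤ,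
        x = ((r ^ a, r ^ b, r ^ (-a - b)) : Equiv.Perm S × Equiv.Perm S × Equiv.Perm S)) ∨
      (∃ a b : ℤ, x = (p * r ^ a, p * r ^ b, ι * r ^ (-a - b))) := by
    intro x hx
    induction hx using Subgroup.closure_induction with
    | mem x hx =>
      right
      rcases hx with h | h | h
      · refine ⟨0, 0, ?_⟩
        rw [h]
        norm_num
      · refine ⟨0, 1, ?_⟩
        rw [h]
        have h2 : p * r ^ (1:ℤ) = ι := by rw [zpow_one, hrdef, ← mul_assoc, hp, one_mul]
        have h3 : ι * r ^ (-0 - 1 : ℤ) = p := by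
          rw [show (-0 - 1 : ℤ) = -1 by ring, zpow_neg, zpow_one, hrinv, ← mul_assoc, hι,
            one_mul]
        rw [← h2, ← h3]
        norm_num
      · refine ⟨1, 0, ?_⟩
        rw [h]
        have h2 : p * r ^ (1:ℤ) = ι := by rw [zpow_one, hrdef, ← mul_assoc, hp, one_mul]
        have h3 : ι * r ^ (-1 - 0 : ℤ) = p := by
          rw [show (-1 - 0 : ℤ) = -1 by ring, zpow_neg, zpow_one, hrinv, ← mul_assoc, hι,
            one_mul]
        rw [← h2, ← h3]
        norm_num
    | one =>
      left; exact ⟨0, 0, by norm_num; rfl⟩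
    | mul x y hxm hym ihx ihy =>
      rcases ihx with ⟨a, b, rfl⟩ | ⟨a, b, rfl⟩ <;> rcases ihy with ⟨c, d, rfl⟩ | ⟨c, d, rfl⟩
      · left
        refine ⟨a + c, b + d, ?_⟩
        rw [Prod.mk_mul_mk, Prod.mk_mul_mk, crr, crr, crr,
          show ((-a - b) + (-c - d) : ℤ) = -(a + c) - (b + d) by ring]
      · right
        refine ⟨c - a, d - b, ?_⟩
        rw [Prod.mk_mul_mk, Prod.mk_mul_mk, cpp, cpp, cpi,
          show ((-c - d) - (-a - b) : ℤ) = -(c - a) - (d - b) by ring]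
      · right
        refine ⟨a + c, b + d, ?_⟩
        rw [Prod.mk_mul_mk, Prod.mk_mul_mk, cpr, cpr, cir,
          show ((-a - b) + (-c - d) : ℤ) = -(a + c) - (b + d) by ring]
      · left
        refine ⟨c - a, d - b, ?_⟩
        rw [Prod.mk_mul_mk, Prod.mk_mul_mk, cpp2, cpp2, cii2,
          show ((-c - d) - (-a - b) : ℤ) = -(c - a) - (d - b) by ring]
    | inv x hxm ihx =>
      rcases ihx with ⟨a, b, rfl⟩ | ⟨a, b, rfl⟩
      · left
        refine ⟨-a, -b, ?_⟩
        rw [Prod.inv_mk, Prod.inv_mk, ← zpow_neg, ← zpow_neg, ← zpow_neg,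
          show (-(-a - b) : ℤ) = -(-a) - (-b) by ring]
      · right
        refine ⟨a, b, ?_⟩
        rw [Prod.inv_mk, Prod.inv_mk]
        have e1 : (p * r ^ a)⁻¹ = p * r ^ a := by
          rw [mul_inv_rev, hpinv, ← zpow_neg]
          exact (hcp a).symm
        have e2 : (p * r ^ b)⁻¹ = p * r ^ b := by
          rw [mul_inv_rev, hpinv, ← zpow_neg]
          exact (hcp b).symm
        have e3 : (ι * r ^ (-a - b))⁻¹ = ι * r ^ (-a - b) := by
          rw [mul_inv_rev, hiinv, ← zpow_neg]
          exact (hci (-a - b)).symm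
        rw [e1, e2, e3]
  -- p is not a power of r
  have hnp : p ∉ Subgroup.zpowers r := by
    intro hmem
    rw [Subgroup.mem_zpowers_iff] at hmem
    obtain ⟨m, hm⟩ := hmem
    have hsub : Subgroup.closure ({p, ι} : Set (Equiv.Perm S)) = Subgroup.zpowers r := by
      apply le_antisymm
      · rw [Subgroup.closure_le]
        intro x hx
        rcases hx with h | h
        · rw [h]; exact ⟨m, hm⟩
        · rw [Set.mem_singleton_iff] at h
          rw [h]
          refine ⟨m + 1, ?_⟩
          show r ^ (m + 1) = ι
          rw [zpow_add, hm, zpow_one, hrdef, ← mul_assoc, hp, one_mul]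
      · rw [Subgroup.zpowers_le]
        exact mul_mem (Subgroup.subset_closure (by simp)) (Subgroup.subset_closure (by simp))
    have hcard : 2 * η = η := by
      rw [← hG, hsub, Nat.card_zpowers, hη]
    have hη0 : η = 0 := by omega
    have hro : orderOf r = 0 := by rw [hη, hη0]
    have h1 : r ^ (m + m) = 1 := by rw [zpow_add, hm, hp]
    by_cases hm0 : m + m = 0
    · have hmz : m = 0 := by omega
      rw [hmz, zpow_zero] at hm
      have hri : r = ι := by rw [hrdef, ← hm, one_mul]
      have : IsOfFinOrder r := by
        refine isOfFinOrder_iff_pow_eq_one.2 ⟨2, by norm_num, ?_⟩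
        rw [pow_two, hri, hι]
      exact (orderOf_eq_zero_iff.1 hro) this
    · have : IsOfFinOrder r := isOfFinOrder_iff_zpow_eq_one.2 ⟨m + m, hm0, h1⟩
      exact (orderOf_eq_zero_iff.1 hro) this
  -- Claim 1 : projection
  have claim1 : Γ.map (MonoidHom.fst (Equiv.Perm S) (Equiv.Perm S × Equiv.Perm S))
      = Subgroup.closure ({p, ι} : Set (Equiv.Perm S)) := by
    rw [hΓdef, MonoidHom.map_closure]
    congr 1
    simp only [Set.image_insert_eq, Set.image_singleton, MonoidHom.coe_fst]
    rw [Set.insert_idem]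
  -- Claim 2 : kernel description
  have claim2 : ∀ x ∈ Γ, x.1 = 1 → ∃ k : ℤ,
      x = ((1, r ^ k, (ι * p) ^ k) : Equiv.Perm S × Equiv.Perm S × Equiv.Perm S) := by
    intro x hx hx1
    rcases hstruct x hx with ⟨a, b, rfl⟩ | ⟨a, b, rfl⟩
    · have ha : r ^ a = 1 := hx1
      refine ⟨b, ?_⟩
      have h3 : r ^ (-a - b) = (ι * p) ^ b := by
        rw [← hrinv, inv_zpow, ← zpow_neg, show (-a - b : ℤ) = -a + -b by ring, zpow_add,
          zpow_neg, ha, inv_one, one_mul]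
      rw [ha, h3]
    · exfalso
      have ha : p * r ^ a = 1 := hx1
      apply hnp
      rw [Subgroup.mem_zpowers_iff]
      refine ⟨-a, ?_⟩
      rw [zpow_neg]
      exact (eq_inv_of_mul_eq_one_left ha).symm
  -- Claim 3 : all kernel elements
  have claim3 : ∀ k : ℤ,
      ((1, r ^ k, (ι * p) ^ k) : Equiv.Perm S × Equiv.Perm S × Equiv.Perm S) ∈ Γ := by
    intro k
    have he : ((1, r ^ k, (ι * p) ^ k) : Equiv.Perm S × Equiv.Perm S × Equiv.Perm S)
        = (r ^ (0:ℤ), r ^ k, r ^ (-(0:ℤ) - k)) := by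
      rw [zpow_zero, ← hrinv, inv_zpow, ← zpow_neg]
      norm_num
    rw [he]
    exact hF 0 k
  refine ⟨claim1, claim2, claim3, ?_⟩
  -- Claim 4 : cardinality
  set φ : Γ →* Equiv.Perm S :=
    (MonoidHom.fst (Equiv.Perm S) (Equiv.Perm S × Equiv.Perm S)).comp Γ.subtype with hφdef
  have hrange : φ.range = Subgroup.closure ({p, ι} : Set (Equiv.Perm S)) := by
    rw [hφdef, MonoidHom.range_comp, Subgroup.range_subtype, claim1]
  have hker : (φ.ker).map Γ.subtype
      = Subgroup.zpowers ((1, r, r⁻¹) : Equiv.Perm S × Equiv.Perm S × Equiv.Perm S) := by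
    apply le_antisymm
    · rintro x ⟨⟨y, hyΓ⟩, hyk, rfl⟩
      have hy1 : y.1 = 1 := hyk
      obtain ⟨k, hk⟩ := claim2 y hyΓ hy1
      rw [Subgroup.mem_zpowers_iff]
      refine ⟨k, ?_⟩
      simp only [Subgroup.coe_subtype]
      rw [hk]
      simp only [Prod.pow_def, one_zpow, inv_zpow, ← zpow_neg]
      rw [← hrinv, inv_zpow, ← zpow_neg]
    · rw [Subgroup.zpowers_le, Subgroup.mem_map]
      refine ⟨⟨(1, r, r⁻¹), hu⟩, ?_, rfl⟩
      rw [MonoidHom.mem_ker]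
      rfl
  have hkcard : Nat.card φ.ker = η := by
    have := Nat.card_congr
      (Subgroup.equivMapOfInjective φ.ker Γ.subtype Γ.subtype_injective).toEquiv
    rw [this, hker, Nat.card_zpowers]
    have ho : orderOf ((1, r, r⁻¹) : Equiv.Perm S × Equiv.Perm S × Equiv.Perm S) = η := by
      rw [Prod.orderOf, Prod.orderOf]
      simp only [orderOf_one, orderOf_inv]
      rw [hη, Nat.lcm_self, Nat.lcm_one_left]
    rw [ho]
  have hqcard : Nat.card (Γ ⧸ φ.ker) = 2 * η := by
    rw [Nat.card_congr (QuotientGroup.quotientKerEquivRange φ).toEquiv]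
    rw [hrange]
    exact hG
  have htot := Subgroup.card_eq_card_quotient_mul_card_subgroup φ.ker
  rw [hqcard, hkcard] at htot
  rw [htot]
  ring
end
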